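/- Under the hypotheses of the main existence theorem (α ≥ 1 a rational with odd denominator, γ ∈ (0,1] a ratio of odd positive integers, f locally Lipschitz, Σ_{n=0}^∞ |1/r_n|^{1/γ} Σ_{i=n}^∞ |a_i| < ∞, Σ_{n=0}^∞ |1/r_n|^{1/γ} Σ_{i=n}^∞ |q_i| < ∞, |p_n| ≤ P < 1 for n ≥ n_0, Σ|a_i| < ∞, Σ|q_i| < ∞), and with d, n_0, n_3, B and T as in the construction, there exist constants c_1, c_2 ≥ 0 with P + c_1 + c_2 < 1 such that for every nonempty subset X of B, limsup_{n→∞} diam (T(X))_n ≤ (P + c_1 + c_2) · limsup_{n→∞} diam X_n; that is, μ(T(X)) ≤ κ μ(X) for a constant κ ∈ [0,1), where μ(X) = limsup_{n→∞} diam X_n. -/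

import Mathlib

open Filter Topology

/-- Sign-preserving power `x ^ ρ` for a rational exponent `ρ = s/t` (in lowest terms) with
odd denominator `t`: it is the unique real `y` with `y ^ t = x ^ s`.  For `x ≥ 0` it agrees
with the usual real power. -/
noncomputable def opow (x : ℝ) (ρ : ℚ) : ℝ :=
  if Even ρ.num ∨ 0 ≤ x then |x| ^ (ρ : ℝ) else -(|x| ^ (ρ : ℝ))

/-- The operator `T`:
`(Tx)_n = -p_n x_{n-k} - Σ_{j=n}^∞ ((1/r_j) Σ_{i=j}^∞ (a_i f(x_{i+1}) + q_i x_i^α))^{1/γ}`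
for `n ≥ n₃`, and `(Tx)_n = x_n` for `n < n₃`. -/
noncomputable def Tmap (k n₃ : ℕ) (r a p q : ℕ → ℝ) (f : ℝ → ℝ) (α γ : ℚ)
    (x : ℕ → ℝ) (n : ℕ) : ℝ :=
  if n₃ ≤ n then
    -(p n * x (n - k)) -
      ∑' j : ℕ, opow ((1 / r (n + j)) *
        ∑' i : ℕ, (a (n + j + i) * f (x (n + j + i + 1)) +
          q (n + j + i) * opow (x (n + j + i)) α)) γ⁻¹
  else x n

/-- `diamAt X n = diam X_n = sup {|x_n - y_n| : x, y ∈ X}`. -/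
noncomputable def diamAt (X : Set (ℕ → ℝ)) (n : ℕ) : ℝ :=
  sSup {v : ℝ | ∃ x ∈ X, ∃ y ∈ X, v = |x n - y n|}

lemma abs_opow (x : ℝ) (ρ : ℚ) : |opow x ρ| = |x| ^ (ρ : ℝ) := by
  unfold opow
  split
  · exact abs_of_nonneg (Real.rpow_nonneg (abs_nonneg x) _)
  · rw [abs_neg]; exact abs_of_nonneg (Real.rpow_nonneg (abs_nonneg x) _)

lemma diamAt_nonneg {X : Set (ℕ → ℝ)} (hX : X.Nonempty) (n : ℕ) : 0 ≤ diamAt X n := by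
  obtain ⟨x₀, hx₀⟩ := hX
  unfold diamAt
  by_cases hb : BddAbove {v : ℝ | ∃ x ∈ X, ∃ y ∈ X, v = |x n - y n|}
  · exact le_csSup hb ⟨x₀, hx₀, x₀, hx₀, by simp⟩
  · rw [Real.sSup_of_not_bddAbove hb]

/-- Step 3: comparison of the measure of noncompactness `μ(X) = limsup_n diam X_n`.
There are constants `c₁, c₂ ≥ 0` with `κ = P + c₁ + c₂ < 1` such that
`μ(T(X)) ≤ κ μ(X)` for every nonempty subset `X` of `B`. -/
theorem measure_of_noncompactness_estimate
    (k : ℕ) (hk : 0 < k) (α γ : ℚ)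
    (hα : 1 ≤ α) (hαden : Odd α.den)
    (hγ0 : 0 < γ) (hγ1 : γ ≤ 1) (hγnum : Odd γ.num) (hγden : Odd γ.den)
    (f : ℝ → ℝ) (hf : LocallyLipschitz f)
    (r a p q : ℕ → ℝ) (hr : ∀ n, r n ≠ 0)
    (hra : Summable fun n => |1 / r n| ^ (γ : ℝ)⁻¹ * ∑' i : ℕ, |a (n + i)|)
    (hrq : Summable fun n => |1 / r n| ^ (γ : ℝ)⁻¹ * ∑' i : ℕ, |q (n + i)|)
    (ha : Summable fun i => |a i|) (hq : Summable fun i => |q i|)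
    (d : ℝ) (hd : 0 < d) (P : ℝ) (hP0 : 0 ≤ P) (hP1 : P < 1)
    (n₀ n₃ : ℕ) (hn₃ : n₀ + k ≤ n₃)
    (hp : ∀ n, n₀ ≤ n → |p n| ≤ P)
    (Md : ℝ) (hMd : ∀ u : ℝ, |u| ≤ d → |f u| ≤ Md)
    (C : ℝ) (hC0 : 0 < C)
    (hC : C ≤ (d - P * d) /
      (2 ^ ((γ : ℝ)⁻¹ - 1) * Md ^ (γ : ℝ)⁻¹ + 2 ^ ((γ : ℝ)⁻¹ - 1) * (opow d α) ^ (γ : ℝ)⁻¹))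
    (htaila : ∀ n, n₃ ≤ n →
      ∑' j : ℕ, (|1 / r (n + j)| * ∑' i : ℕ, |a (n + j + i)|) ^ (γ : ℝ)⁻¹ ≤ C)
    (htailq : ∀ n, n₃ ≤ n →
      ∑' j : ℕ, (|1 / r (n + j)| * ∑' i : ℕ, |q (n + j + i)|) ^ (γ : ℝ)⁻¹ ≤ C) :
    ∃ c₁ c₂ : ℝ, 0 ≤ c₁ ∧ 0 ≤ c₂ ∧ P + c₁ + c₂ < 1 ∧
      ∀ X : Set (ℕ → ℝ), X.Nonempty →
        (∀ x ∈ X, ∀ i, n₀ ≤ i → |x i| ≤ d) →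
        limsup (fun n => diamAt ((Tmap k n₃ r a p q f α γ) '' X) n) atTop ≤
          (P + c₁ + c₂) * limsup (fun n => diamAt X n) atTop := by
  -- basic positivity facts
  have hγR : (0:ℝ) < (γ:ℝ) := by exact_mod_cast hγ0
  have hγR1 : (γ:ℝ) ≤ 1 := by exact_mod_cast hγ1
  set β : ℝ := (γ : ℝ)⁻¹ with hβdef
  have hβ0 : 0 < β := inv_pos.2 hγR
  have hβ1 : 1 ≤ β := one_le_inv₀ hγR |>.2 hγR1
  have hαR : (1:ℝ) ≤ (α:ℝ) := by exact_mod_cast hα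
  have hMd0 : 0 ≤ Md := le_trans (abs_nonneg (f 0)) (hMd 0 (by simp [hd.le]))
  set Dα : ℝ := d ^ (α : ℝ) with hDαdef
  have hDα0 : 0 ≤ Dα := Real.rpow_nonneg hd.le _
  set M0 : ℝ := max Md Dα with hM0def
  have hM00 : 0 ≤ M0 := le_trans hMd0 (le_max_left _ _)
  set A : ℕ → ℝ := fun m => ∑' i : ℕ, |a (m + i)| with hAdef
  set Q : ℕ → ℝ := fun m => ∑' i : ℕ, |q (m + i)| with hQdef
  have hAsum : ∀ m, Summable fun i => |a (m + i)| := fun m =>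
    ha.comp_injective (add_right_injective m)
  have hQsum : ∀ m, Summable fun i => |q (m + i)| := fun m =>
    hq.comp_injective (add_right_injective m)
  have hA0 : ∀ m, 0 ≤ A m := fun m => tsum_nonneg fun i => abs_nonneg _
  have hQ0 : ∀ m, 0 ≤ Q m := fun m => tsum_nonneg fun i => abs_nonneg _
  have hAtend : Tendsto A atTop (𝓝 0) := by
    have := tendsto_sum_nat_add (fun n => |a n|)
    refine this.congr fun m => ?_
    simp [hAdef, add_comm]
  have hQtend : Tendsto Q atTop (𝓝 0) := by
    have := tendsto_sum_nat_add (fun n => |q n|)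
    refine this.congr fun m => ?_
    simp [hQdef, add_comm]
  set ψ : ℕ → ℝ := fun m => M0 ^ β * (|1 / r m| ^ β * A m + |1 / r m| ^ β * Q m) with hψdef
  have hψ0 : ∀ m, 0 ≤ ψ m := fun m =>
    mul_nonneg (Real.rpow_nonneg hM00 _)
      (add_nonneg (mul_nonneg (Real.rpow_nonneg (abs_nonneg _) _) (hA0 m))
        (mul_nonneg (Real.rpow_nonneg (abs_nonneg _) _) (hQ0 m)))
  have hψsum : Summable ψ := (hra.add hrq).mul_left (M0 ^ β)
  set ε : ℕ → ℝ := fun n => ∑' j : ℕ, ψ (n + j) with hεdef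
  have hε0 : ∀ n, 0 ≤ ε n := fun n => tsum_nonneg fun j => hψ0 _
  have hεtend : Tendsto ε atTop (𝓝 0) := by
    have := tendsto_sum_nat_add ψ
    refine this.congr fun m => ?_
    simp [hεdef, add_comm]
  -- choose N₁ so that tails are small
  obtain ⟨N₁, hN₁⟩ : ∃ N₁, ∀ m, N₁ ≤ m → A m + Q m ≤ 1 := by
    have h1 : ∀ᶠ m in atTop, A m < 1/2 := hAtend.eventually (eventually_lt_nhds (by norm_num))
    have h2 : ∀ᶠ m in atTop, Q m < 1/2 := hQtend.eventually (eventually_lt_nhds (by norm_num))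
    obtain ⟨N₁, hN⟩ := eventually_atTop.1 (h1.and h2)
    exact ⟨N₁, fun m hm => by have := hN m hm; linarith [this.1, this.2]⟩
  refine ⟨0, 0, le_refl 0, le_refl 0, by linarith, ?_⟩
  intro X hX hXB
  have hTX : ((Tmap k n₃ r a p q f α γ) '' X).Nonempty := hX.image _
  have hn₀₃ : n₀ ≤ n₃ := by omega
  -- the key tail estimate for the series part
  have hS : ∀ x ∈ X, ∀ n : ℕ, n₃ ≤ n → N₁ ≤ n →
      |∑' j : ℕ, opow ((1 / r (n + j)) *
        ∑' i : ℕ, (a (n + j + i) * f (x (n + j + i + 1)) +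
          q (n + j + i) * opow (x (n + j + i)) α)) γ⁻¹| ≤ ε n := by
    intro x hx n hn hnN
    set w : ℕ → ℝ := fun j => (1 / r (n + j)) *
        ∑' i : ℕ, (a (n + j + i) * f (x (n + j + i + 1)) +
          q (n + j + i) * opow (x (n + j + i)) α) with hwdef
    have hterm : ∀ j i : ℕ,
        |a (n + j + i) * f (x (n + j + i + 1)) + q (n + j + i) * opow (x (n + j + i)) α| ≤
          Md * |a (n + j + i)| + Dα * |q (n + j + i)| := by
      intro j i
      have hxb1 : |x (n + j + i + 1)| ≤ d := hXB x hx _ (by omega)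
      have hxb2 : |x (n + j + i)| ≤ d := hXB x hx _ (by omega)
      have h1 : |f (x (n + j + i + 1))| ≤ Md := hMd _ hxb1
      have h2 : |opow (x (n + j + i)) α| ≤ Dα := by
        rw [abs_opow]
        exact Real.rpow_le_rpow (abs_nonneg _) hxb2 (by linarith)
      calc |a (n + j + i) * f (x (n + j + i + 1)) + q (n + j + i) * opow (x (n + j + i)) α|
          ≤ |a (n + j + i) * f (x (n + j + i + 1))| + |q (n + j + i) * opow (x (n + j + i)) α| :=
            abs_add_le _ _
        _ = |a (n + j + i)| * |f (x (n + j + i + 1))| + |q (n + j + i)| * |opow (x (n + j + i)) α| := by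
            rw [abs_mul, abs_mul]
        _ ≤ |a (n + j + i)| * Md + |q (n + j + i)| * Dα :=
            add_le_add (mul_le_mul_of_nonneg_left h1 (abs_nonneg _))
              (mul_le_mul_of_nonneg_left h2 (abs_nonneg _))
        _ = Md * |a (n + j + i)| + Dα * |q (n + j + i)| := by ring
    have hmajsum : ∀ j : ℕ, Summable fun i => Md * |a (n + j + i)| + Dα * |q (n + j + i)| :=
      fun j => ((hAsum (n + j)).mul_left Md).add ((hQsum (n + j)).mul_left Dα)
    have htermsum : ∀ j : ℕ, Summable fun i =>
        a (n + j + i) * f (x (n + j + i + 1)) + q (n + j + i) * opow (x (n + j + i)) α := by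
      intro j
      refine Summable.of_abs (Summable.of_nonneg_of_le (fun i => abs_nonneg _)
        (fun i => hterm j i) (hmajsum j))
    have hinner : ∀ j : ℕ,
        |∑' i : ℕ, (a (n + j + i) * f (x (n + j + i + 1)) +
          q (n + j + i) * opow (x (n + j + i)) α)| ≤ Md * A (n + j) + Dα * Q (n + j) := by
      intro j
      have h1 : ‖∑' i : ℕ, (a (n + j + i) * f (x (n + j + i + 1)) +
          q (n + j + i) * opow (x (n + j + i)) α)‖ ≤
          ∑' i : ℕ, (Md * |a (n + j + i)| + Dα * |q (n + j + i)|) :=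
        tsum_of_norm_bounded (hmajsum j).hasSum (fun i => by
          rw [Real.norm_eq_abs]; exact hterm j i)
      rw [Real.norm_eq_abs] at h1
      refine h1.trans_eq ?_
      rw [Summable.tsum_add ((hAsum (n + j)).mul_left Md) ((hQsum (n + j)).mul_left Dα),
        tsum_mul_left, tsum_mul_left]
    have hw : ∀ j : ℕ, |w j| ≤ |1 / r (n + j)| * (M0 * (A (n + j) + Q (n + j))) := by
      intro j
      rw [hwdef, abs_mul]
      refine mul_le_mul_of_nonneg_left ((hinner j).trans ?_) (abs_nonneg _)
      have h1 : Md ≤ M0 := le_max_left _ _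
      have h2 : Dα ≤ M0 := le_max_right _ _
      nlinarith [hA0 (n + j), hQ0 (n + j)]
    have hφ : ∀ j : ℕ, |opow (w j) γ⁻¹| ≤ ψ (n + j) := by
      intro j
      rw [abs_opow]
      have hcast : ((γ⁻¹ : ℚ) : ℝ) = β := by rw [hβdef]; push_cast; ring
      rw [hcast]
      have h1 : |w j| ^ β ≤ (|1 / r (n + j)| * (M0 * (A (n + j) + Q (n + j)))) ^ β :=
        Real.rpow_le_rpow (abs_nonneg _) (hw j) hβ0.le
      refine h1.trans ?_
      rw [Real.mul_rpow (abs_nonneg _) (mul_nonneg hM00 (add_nonneg (hA0 _) (hQ0 _))),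
        Real.mul_rpow hM00 (add_nonneg (hA0 _) (hQ0 _))]
      have hAQ1 : A (n + j) + Q (n + j) ≤ 1 := hN₁ _ (by omega)
      have hAQ0 : 0 ≤ A (n + j) + Q (n + j) := add_nonneg (hA0 _) (hQ0 _)
      have hpow : (A (n + j) + Q (n + j)) ^ β ≤ A (n + j) + Q (n + j) := by
        rcases eq_or_lt_of_le hAQ0 with h | h
        · rw [← h, Real.zero_rpow hβ0.ne']
        · calc (A (n + j) + Q (n + j)) ^ β ≤ (A (n + j) + Q (n + j)) ^ (1:ℝ) :=
              Real.rpow_le_rpow_of_exponent_ge h hAQ1 hβ1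
            _ = A (n + j) + Q (n + j) := Real.rpow_one _
      calc |1 / r (n + j)| ^ β * (M0 ^ β * (A (n + j) + Q (n + j)) ^ β)
          ≤ |1 / r (n + j)| ^ β * (M0 ^ β * (A (n + j) + Q (n + j))) := by
            refine mul_le_mul_of_nonneg_left (mul_le_mul_of_nonneg_left hpow
              (Real.rpow_nonneg hM00 _)) (Real.rpow_nonneg (abs_nonneg _) _)
        _ = ψ (n + j) := by rw [hψdef]; ring
    have hψtail : Summable fun j => ψ (n + j) := hψsum.comp_injective (add_right_injective n)
    have h2 : ‖∑' j : ℕ, opow (w j) γ⁻¹‖ ≤ ∑' j : ℕ, ψ (n + j) :=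
      tsum_of_norm_bounded hψtail.hasSum (fun j => by rw [Real.norm_eq_abs]; exact hφ j)
    rw [Real.norm_eq_abs] at h2
    exact h2
  -- bounded above facts for diamAt X
  have hbddX : ∀ n : ℕ, n₀ ≤ n → BddAbove {v : ℝ | ∃ x ∈ X, ∃ y ∈ X, v = |x n - y n|} := by
    intro n hn
    refine ⟨2 * d, ?_⟩
    rintro v ⟨x, hx, y, hy, rfl⟩
    have h1 := hXB x hx n hn
    have h2 := hXB y hy n hn
    calc |x n - y n| ≤ |x n| + |y n| := abs_sub _ _
      _ ≤ 2 * d := by linarith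
  have hDle : ∀ n : ℕ, n₀ ≤ n → diamAt X n ≤ 2 * d := by
    intro n hn
    obtain ⟨x₀, hx₀⟩ := hX
    refine csSup_le ⟨_, ⟨x₀, hx₀, x₀, hx₀, rfl⟩⟩ ?_
    rintro v ⟨x, hx, y, hy, rfl⟩
    have h1 := hXB x hx n hn
    have h2 := hXB y hy n hn
    calc |x n - y n| ≤ |x n| + |y n| := abs_sub _ _
      _ ≤ 2 * d := by linarith
  -- main pointwise estimate
  have hTd : ∀ n : ℕ, n₃ ≤ n → N₁ ≤ n →
      diamAt ((Tmap k n₃ r a p q f α γ) '' X) n ≤ P * diamAt X (n - k) + 2 * ε n := by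
    intro n hn hnN
    have hnk : n₀ ≤ n - k := by omega
    obtain ⟨x₀, hx₀⟩ := hX
    refine csSup_le ⟨_, ⟨_, ⟨x₀, hx₀, rfl⟩, _, ⟨x₀, hx₀, rfl⟩, rfl⟩⟩ ?_
    rintro v ⟨x', ⟨x, hx, rfl⟩, y', ⟨y, hy, rfl⟩, rfl⟩
    simp only [Tmap, if_pos hn]
    set Sx : ℝ := ∑' j : ℕ, opow ((1 / r (n + j)) *
        ∑' i : ℕ, (a (n + j + i) * f (x (n + j + i + 1)) +
          q (n + j + i) * opow (x (n + j + i)) α)) γ⁻¹ with hSxdef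
    set Sy : ℝ := ∑' j : ℕ, opow ((1 / r (n + j)) *
        ∑' i : ℕ, (a (n + j + i) * f (y (n + j + i + 1)) +
          q (n + j + i) * opow (y (n + j + i)) α)) γ⁻¹ with hSydef
    have h1 : |Sx| ≤ ε n := hS x hx n hn hnN
    have h2 : |Sy| ≤ ε n := hS y hy n hn hnN
    have h3 : |p n| ≤ P := hp n (by omega)
    have hΔ : |x (n - k) - y (n - k)| ≤ diamAt X (n - k) :=
      le_csSup (hbddX _ hnk) ⟨x, hx, y, hy, rfl⟩
    have key : |(-(p n * x (n - k)) - Sx) - (-(p n * y (n - k)) - Sy)| ≤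
        |p n| * |x (n - k) - y (n - k)| + (|Sy| + |Sx|) := by
      have heq : (-(p n * x (n - k)) - Sx) - (-(p n * y (n - k)) - Sy) =
          -(p n * (x (n - k) - y (n - k))) + (Sy - Sx) := by ring
      rw [heq]
      calc |(-(p n * (x (n - k) - y (n - k)))) + (Sy - Sx)|
          ≤ |(-(p n * (x (n - k) - y (n - k))))| + |Sy - Sx| := abs_add_le _ _
        _ ≤ |p n| * |x (n - k) - y (n - k)| + (|Sy| + |Sx|) := by
            rw [abs_neg, abs_mul]
            exact add_le_add_right (abs_sub _ _) _
    refine key.trans ?_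
    have h4 : |p n| * |x (n - k) - y (n - k)| ≤ P * diamAt X (n - k) :=
      mul_le_mul h3 hΔ (abs_nonneg _) hP0
    linarith
  -- limsup bookkeeping
  have hD0 : ∀ n, 0 ≤ diamAt X n := diamAt_nonneg hX
  have hG0 : ∀ n, 0 ≤ diamAt ((Tmap k n₃ r a p q f α γ) '' X) n := diamAt_nonneg hTX
  set L : ℝ := limsup (fun n => diamAt X n) atTop with hLdef
  have hbddD : IsBoundedUnder (· ≤ ·) atTop (fun n => diamAt X n) :=
    isBoundedUnder_of_eventually_le (a := 2 * d)
      (eventually_atTop.2 ⟨n₀, fun n hn => hDle n hn⟩)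
  have hgoal : limsup (fun n => diamAt ((Tmap k n₃ r a p q f α γ) '' X) n) atTop ≤ P * L := by
    refine le_of_forall_pos_le_add fun δ hδ => ?_
    have hev1 : ∀ᶠ n in atTop, diamAt X n < L + δ / 2 :=
      eventually_lt_of_limsup_lt (by linarith) hbddD
    obtain ⟨N₂, hN₂⟩ := eventually_atTop.1 hev1
    have hev2 : ∀ᶠ n in atTop, ε n < δ / 4 := hεtend.eventually (eventually_lt_nhds (by linarith))
    obtain ⟨N₄, hN₄⟩ := eventually_atTop.1 hev2
    have hfinal : ∀ᶠ n in atTop,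
        diamAt ((Tmap k n₃ r a p q f α γ) '' X) n ≤ P * L + δ := by
      refine eventually_atTop.2 ⟨max (max n₃ N₁) (max (N₂ + k) N₄), fun n hn => ?_⟩
      have hn1 : n₃ ≤ n := le_trans (le_trans (le_max_left _ _) (le_max_left _ _)) hn
      have hn2 : N₁ ≤ n := le_trans (le_trans (le_max_right _ _) (le_max_left _ _)) hn
      have hn3 : N₂ ≤ n - k := by
        have := le_trans (le_trans (le_max_left _ _) (le_max_right _ _)) hn; omega
      have hn4 : N₄ ≤ n := le_trans (le_trans (le_max_right _ _) (le_max_right _ _)) hn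
      have e1 := hTd n hn1 hn2
      have e2 : diamAt X (n - k) < L + δ / 2 := hN₂ _ hn3
      have e3 : ε n < δ / 4 := hN₄ _ hn4
      have e4 : P * diamAt X (n - k) ≤ P * (L + δ / 2) :=
        mul_le_mul_of_nonneg_left e2.le hP0
      have e5 : P * (L + δ / 2) ≤ P * L + δ / 2 := by nlinarith
      linarith
    exact limsup_le_of_le
      ((isBoundedUnder_of_eventually_ge (a := (0:ℝ))
        (Eventually.of_forall hG0)).isCoboundedUnder_flip) hfinal
  have : P + 0 + 0 = P := by ring
  rw [this]
  exact hgoal
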